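/- arXiv:1401.1745 — 4 statements merged into one kernel-verified Lean document; each statement's English description precedes it below -/
import Mathlib

section
/- For every d ≥ 1, the Hamming d-cube Q_d (the graph on vertex set (ZMod 2)^d in which two vertices are adjacent iff they differ in exactly one coordinate) admits perfect state transfer at time π/2 from each vertex u to its antipodal vertex u + 𝟙, where 𝟙 is the all-ones vector. -/
open Matrix

/-- The transition matrix `U(t) = exp(itA)` of the continuous-time quantum walk on `G`. -/
noncomputable def transitionMatrix {V : Type*} [Fintype V] [DecidableEq V]
    (G : SimpleGraph V) (t : ℝ) : Matrix V V ℂ :=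
  letI := Classical.decRel G.Adj
  NormedSpace.exp ((Complex.I * (t : ℂ)) • G.adjMatrix ℂ)

/-- `G` admits perfect state transfer from `u` to `v` at time `t`. -/
def HasPST {V : Type*} [Fintype V] [DecidableEq V]
    (G : SimpleGraph V) (u v : V) (t : ℝ) : Prop :=
  u ≠ v ∧ ∃ μ : ℂ, transitionMatrix G t *ᵥ (Pi.single u 1 : V → ℂ)
      = μ • (Pi.single v 1 : V → ℂ)

/-- The Hamming `d`-cube: vertices are vectors in `(ZMod 2)^d`, adjacent iff they
differ in exactly one coordinate. -/
def cubeGraph (d : ℕ) : SimpleGraph (Fin d → ZMod 2) :=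
  SimpleGraph.fromRel (fun u v => (Finset.univ.filter fun i => u i ≠ v i).card = 1)

/-! ### Auxiliary material -/

/-- Translation (shift) matrix by `x`. -/
def shiftM (d : ℕ) (x : Fin d → ZMod 2) : Matrix (Fin d → ZMod 2) (Fin d → ZMod 2) ℂ :=
  Matrix.of fun a b => if b = a + x then 1 else 0

lemma shiftM_mul (d : ℕ) (x y : Fin d → ZMod 2) :
    shiftM d x * shiftM d y = shiftM d (x + y) := by
  ext a b
  simp only [shiftM, Matrix.mul_apply, Matrix.of_apply]
  rw [Finset.sum_eq_single (a + x)]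
  · simp [add_assoc]
  · intro c _ hc
    rw [if_neg hc, zero_mul]
  · simp

lemma shiftM_zero (d : ℕ) : shiftM d 0 = 1 := by
  ext a b
  simp only [shiftM, Matrix.of_apply, add_zero, Matrix.one_apply]
  simp [eq_comm]

lemma shiftM_sq (d : ℕ) (x : Fin d → ZMod 2) : shiftM d x * shiftM d x = 1 := by
  have hx : x + x = 0 := by
    funext i
    have : ∀ a : ZMod 2, a + a = 0 := by decide
    exact this (x i)
  rw [shiftM_mul, hx, shiftM_zero]

lemma shiftM_commute (d : ℕ) (x y : Fin d → ZMod 2) :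
    Commute (shiftM d x) (shiftM d y) := by
  unfold Commute SemiconjBy
  rw [shiftM_mul, shiftM_mul, add_comm]

/-- `exp (c • S) = cosh c • 1 + sinh c • S` for an involution `S`. -/
lemma exp_smul_involution {m : Type*} [Fintype m] [DecidableEq m]
    (S : Matrix m m ℂ) (h : S * S = 1) (c : ℂ) :
    NormedSpace.exp (c • S) =
      Complex.cosh c • (1 : Matrix m m ℂ) + Complex.sinh c • S := by
  letI : SeminormedRing (Matrix m m ℂ) := Matrix.linftyOpSemiNormedRing
  letI : NormedRing (Matrix m m ℂ) := Matrix.linftyOpNormedRing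
  letI : NormedAlgebra ℂ (Matrix m m ℂ) := Matrix.linftyOpNormedAlgebra
  rw [NormedSpace.exp_eq_tsum (𝕂 := ℂ)]
  refine HasSum.tsum_eq ?_
  refine HasSum.even_add_odd ?_ ?_
  · have := (Complex.hasSum_cosh c).smul_const (1 : Matrix m m ℂ)
    convert this using 2 with k
    · rfl
    rw [smul_pow, pow_mul S, sq, h, one_pow, smul_smul]
    congr 1
    ring
  · have := (Complex.hasSum_sinh c).smul_const S
    convert this using 2 with k
    · rfl
    rw [smul_pow, pow_succ S, pow_mul S, sq, h, one_pow, one_mul, smul_smul]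
    congr 1
    ring

lemma exp_I_pi_div_two_smul {m : Type*} [Fintype m] [DecidableEq m]
    (S : Matrix m m ℂ) (h : S * S = 1) :
    NormedSpace.exp ((Complex.I * ((Real.pi / 2 : ℝ) : ℂ)) • S) = Complex.I • S := by
  rw [exp_smul_involution S h]
  have h1 : Complex.cosh (Complex.I * ((Real.pi / 2 : ℝ) : ℂ)) = 0 := by
    rw [mul_comm, Complex.cosh_mul_I]
    push_cast
    exact Complex.cos_pi_div_two
  have h2 : Complex.sinh (Complex.I * ((Real.pi / 2 : ℝ) : ℂ)) = Complex.I := by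
    rw [mul_comm, Complex.sinh_mul_I]
    push_cast
    rw [Complex.sin_pi_div_two, one_mul]
  rw [h1, h2, zero_smul, zero_add]

lemma cube_adj_eq (d : ℕ) (inst : DecidableRel (cubeGraph d).Adj) :
    (cubeGraph d).adjMatrix ℂ = ∑ j : Fin d, shiftM d (Pi.single j 1) := by
  ext a b
  classical
  have hsingle : ∀ j : Fin d, b = a + Pi.single j 1 ↔
      (Finset.univ.filter fun i => a i ≠ b i) = {j} := by
    intro j
    constructor
    · rintro rfl
      ext i
      simp only [Finset.mem_filter, Finset.mem_univ, true_and, Finset.mem_singleton,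
        Pi.add_apply]
      by_cases hij : i = j
      · subst hij; simp
      · simp [Pi.single_eq_of_ne hij, hij]
    · intro hs
      funext i
      by_cases hij : i = j
      · subst hij
        have : i ∈ Finset.univ.filter fun i => a i ≠ b i := by rw [hs]; simp
        simp only [Finset.mem_filter, Finset.mem_univ, true_and] at this
        have h2 : ∀ x y : ZMod 2, x ≠ y → y = x + 1 := by decide
        simpa using h2 _ _ this
      · have : i ∉ Finset.univ.filter fun i' => a i' ≠ b i' := by
          rw [hs]; simpa using hij
        simp only [Finset.mem_filter, Finset.mem_univ, true_and, not_not] at this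
        simp [Pi.single_eq_of_ne hij, ← this]
  have hadj : (cubeGraph d).Adj a b ↔ (Finset.univ.filter fun i => a i ≠ b i).card = 1 := by
    rw [cubeGraph, SimpleGraph.fromRel_adj]
    constructor
    · rintro ⟨-, h | h⟩
      · exact h
      · convert h using 2
        ext i
        simp [ne_comm]
    · intro h
      refine ⟨?_, Or.inl h⟩
      rintro rfl
      simp at h
  simp only [Matrix.sum_apply, SimpleGraph.adjMatrix_apply, shiftM, Matrix.of_apply]
  simp only [hadj]
  have : ∀ j : Fin d, (if b = a + Pi.single j 1 then (1 : ℂ) else 0)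
      = if ((Finset.univ.filter fun i => a i ≠ b i).card = 1
          ∧ j ∈ Finset.univ.filter fun i => a i ≠ b i) then 1 else 0 := by
    intro j
    congr 1
    rw [hsingle j, eq_iff_iff]
    constructor
    · intro hh; rw [hh]; simp
    · rintro ⟨h1, h2⟩
      obtain ⟨x, hx⟩ := Finset.card_eq_one.mp h1
      rw [hx] at h2 ⊢
      simp only [Finset.mem_singleton] at h2
      rw [h2]
  rw [Finset.sum_congr rfl fun j _ => this j]
  by_cases hc : (Finset.univ.filter fun i => a i ≠ b i).card = 1
  · simp only [hc, true_and, if_pos]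
    rw [Finset.sum_ite_mem, Finset.univ_inter, Finset.sum_const, hc]
    simp
  · simp [hc]

lemma shiftM_mulVec (d : ℕ) (x : Fin d → ZMod 2) (u : Fin d → ZMod 2) :
    shiftM d x *ᵥ (Pi.single u 1 : (Fin d → ZMod 2) → ℂ) = Pi.single (u + x) 1 := by
  funext v
  simp only [Matrix.mulVec, dotProduct, shiftM, Matrix.of_apply]
  rw [Finset.sum_eq_single (v + x)]
  · have hx : x + x = 0 := by
      funext i
      have : ∀ a : ZMod 2, a + a = 0 := by decide
      exact this (x i)
    have key : v + x = u ↔ v = u + x := by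
      constructor
      · rintro rfl; rw [add_assoc, hx, add_zero]
      · rintro rfl; rw [add_assoc, hx, add_zero]
    by_cases hvu : v + x = u
    · rw [if_pos rfl, Pi.single_apply, if_pos hvu, Pi.single_apply, if_pos (key.mp hvu)]
      ring
    · rw [if_pos rfl, Pi.single_apply, if_neg hvu, Pi.single_apply,
        if_neg (fun hh => hvu (key.mpr hh))]
      ring
  · intro c _ hc
    rw [if_neg hc, zero_mul]
  · simp

lemma exp_sum_shiftM (d : ℕ) (s : Finset (Fin d)) :
    NormedSpace.exp ((Complex.I * ((Real.pi / 2 : ℝ) : ℂ)) •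
        ∑ j ∈ s, shiftM d (Pi.single j 1)) =
      (Complex.I ^ s.card) • shiftM d (∑ j ∈ s, Pi.single j 1) := by
  classical
  induction s using Finset.induction with
  | empty => simp [shiftM_zero, NormedSpace.exp_zero]
  | insert a s ha ih =>
    rw [Finset.sum_insert ha, Finset.sum_insert ha, smul_add,
      Matrix.exp_add_of_commute, ih, exp_I_pi_div_two_smul _ (shiftM_sq d _),
      Finset.card_insert_of_notMem ha]
    · rw [Matrix.smul_mul, Matrix.mul_smul, shiftM_mul, smul_smul, pow_succ]
      ring_nf
    · exact ((Commute.sum_right s _ _ fun j _ =>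
        shiftM_commute d _ _).smul_left _).smul_right _

/-- For every `d ≥ 1`, the Hamming `d`-cube admits perfect state
transfer at time `π/2` from each vertex `u` to its antipode `u + 𝟙`. -/
theorem stmt_12 (d : ℕ) (hd : 1 ≤ d) :
    ∀ u : Fin d → ZMod 2,
      HasPST (cubeGraph d) u (u + fun _ => 1) (Real.pi / 2) := by
  intro u
  constructor
  · intro hu
    have := congrFun hu ⟨0, hd⟩
    simp only [Pi.add_apply] at this
    exact one_ne_zero (left_eq_add.mp this)
  · refine ⟨Complex.I ^ d, ?_⟩
    have hone : (∑ j : Fin d, Pi.single j (1 : ZMod 2)) = fun _ => 1 := by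
      have := Finset.univ_sum_single (fun _ : Fin d => (1 : ZMod 2))
      exact this
    rw [transitionMatrix, cube_adj_eq d (Classical.decRel _), exp_sum_shiftM d Finset.univ, hone,
      Matrix.smul_mulVec, shiftM_mulVec]
    simp
end

section
/- For every d ≥ 1, the halved 2d-cube (the graph whose vertices are the vectors of even Hamming weight in (ZMod 2)^{2d}, two vertices being adjacent iff their Hamming distance is exactly 2) admits perfect state transfer at time π/2 from each vertex u to the vertex u + 𝟙, where 𝟙 is the all-ones vector. -/
open Matrix

/-- The halved `2d`-cube: vertices are the vectors of even Hamming weight in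
`(ZMod 2)^(2d)`, adjacent iff their Hamming distance is exactly 2. -/
def halvedCube (d : ℕ) :
    SimpleGraph {u : Fin (2 * d) → ZMod 2 //
      Even (Finset.univ.filter fun i => u i ≠ 0).card} :=
  SimpleGraph.fromRel
    (fun u v => (Finset.univ.filter fun i => u.1 i ≠ v.1 i).card = 2)

namespace Stmt13Aux

open Finset Complex

theorem exp_mulVec_eigen {V : Type*} [Fintype V] [DecidableEq V]
    (M : Matrix V V ℂ) (x : V → ℂ) (μ : ℂ) (h : M *ᵥ x = μ • x) :
    NormedSpace.exp M *ᵥ x = Complex.exp μ • x := by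
  letI : SeminormedRing (Matrix V V ℂ) := Matrix.linftyOpSemiNormedRing
  letI : NormedRing (Matrix V V ℂ) := Matrix.linftyOpNormedRing
  letI : NormedAlgebra ℂ (Matrix V V ℂ) := Matrix.linftyOpNormedAlgebra
  have hn : ∀ n : ℕ, M ^ n *ᵥ x = μ ^ n • x := by
    intro n
    induction n with
    | zero => simp
    | succ n ih =>
      rw [pow_succ, ← mulVec_mulVec, h, mulVec_smul, ih, smul_smul, pow_succ, mul_comm]
  have hg : IsLinearMap ℂ (fun N : Matrix V V ℂ => N *ᵥ x) :=
    ⟨fun N P => add_mulVec N P x, fun c N => smul_mulVec c N x⟩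
  let f : Matrix V V ℂ →L[ℂ] (V → ℂ) := LinearMap.toContinuousLinearMap hg.mk'
  have hf : ∀ N : Matrix V V ℂ, f N = N *ᵥ x := fun _ => rfl
  rw [NormedSpace.exp_eq_tsum (𝕂 := ℂ), ← hf]
  rw [f.map_tsum (NormedSpace.expSeries_summable' (𝕂 := ℂ) M)]
  have : ∀ n : ℕ, f ((n.factorial⁻¹ : ℂ) • M ^ n) = ((n.factorial⁻¹ : ℂ) * μ ^ n) • x := by
    intro n
    rw [_root_.map_smul, hf, hn, smul_smul]
  simp_rw [this]
  have hs : Summable fun n : ℕ => (n.factorial⁻¹ : ℂ) * μ ^ n := by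
    simpa [smul_eq_mul] using NormedSpace.expSeries_summable' (𝕂 := ℂ) μ
  rw [hs.tsum_smul_const]
  congr 1
  rw [Complex.exp_eq_exp_ℂ, NormedSpace.exp_eq_tsum (𝕂 := ℂ)]
  simp [smul_eq_mul]

noncomputable def sgn (x : ZMod 2) : ℂ := if x = 0 then 1 else -1

lemma zmod2_cases : ∀ x : ZMod 2, x = 0 ∨ x = 1 := by decide

lemma sgn_zero : sgn 0 = 1 := rfl
lemma sgn_one : sgn 1 = -1 := rfl

lemma sgn_mul_add (b x y : ZMod 2) : sgn (b * (x + y)) = sgn (b * x) * sgn (b * y) := by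
  rcases zmod2_cases b with hb | hb <;> rcases zmod2_cases x with hx | hx <;>
    rcases zmod2_cases y with hy | hy <;> subst hb <;> subst hx <;> subst hy <;>
    (simp only [one_mul, mul_one, zero_mul, mul_zero, show (1+1:ZMod 2) = 0 by decide, sgn];
      norm_num)

noncomputable def chi {n : ℕ} (a u : Fin n → ZMod 2) : ℂ := ∏ i, sgn (a i * u i)

lemma chi_add {n : ℕ} (a u v : Fin n → ZMod 2) :
    chi a (u + v) = chi a u * chi a v := by
  rw [chi, chi, chi, ← Finset.prod_mul_distrib]
  exact Finset.prod_congr rfl fun i _ => sgn_mul_add (a i) (u i) (v i)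

lemma sum_sgn_two (w : ZMod 2) : ∑ b : ZMod 2, sgn (b * w) = 1 + sgn w := by
  rw [show (Finset.univ : Finset (ZMod 2)) = {0, 1} from rfl]
  rw [Finset.sum_insert (by decide), Finset.sum_singleton]
  simp [sgn_zero]

lemma sum_chi {n : ℕ} (w : Fin n → ZMod 2) :
    ∑ a : Fin n → ZMod 2, chi a w = if w = 0 then (2 : ℂ) ^ n else 0 := by
  have key : ∑ a : Fin n → ZMod 2, chi a w = ∏ i, (1 + sgn (w i)) := by
    simp_rw [← sum_sgn_two, chi]
    rw [← Fintype.piFinset_univ]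
    exact (Finset.prod_univ_sum (fun _ => (univ : Finset (ZMod 2))) (fun i b => sgn (b * w i))).symm
  rw [key]
  by_cases hw : w = 0
  · subst hw; simp [sgn_zero]; norm_num
  · rw [if_neg hw]
    obtain ⟨i, hi⟩ : ∃ i, w i ≠ 0 := by
      by_contra h; push_neg at h; exact hw (funext h)
    apply Finset.prod_eq_zero (Finset.mem_univ i)
    rw [sgn]; rw [if_neg hi]; ring

lemma card_cast_zmod {n : ℕ} (u : Fin n → ZMod 2) :
    ((Finset.univ.filter fun i => u i ≠ 0).card : ZMod 2) = ∑ i, u i := by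
  rw [Finset.card_filter]
  push_cast
  refine Finset.sum_congr rfl fun i _ => ?_
  rcases zmod2_cases (u i) with h | h <;> simp [h]

lemma even_iff_sum_zero {n : ℕ} (u : Fin n → ZMod 2) :
    Even (Finset.univ.filter fun i => u i ≠ 0).card ↔ (∑ i, u i) = 0 := by
  rw [← card_cast_zmod, even_iff_two_dvd, ← ZMod.natCast_eq_zero_iff]

def ind {n : ℕ} (p : Fin n × Fin n) : Fin n → ZMod 2 :=
  fun x => if x = p.1 ∨ x = p.2 then 1 else 0

lemma ind_eq_iff {n : ℕ} {x y i j : Fin n} (hij : i ≠ j) :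
    ind (x, y) = ind (i, j) ↔ (x = i ∧ y = j) ∨ (x = j ∧ y = i) := by
  rw [← Set.pair_eq_pair_iff]
  constructor
  · intro h
    ext z
    have hz := congrFun h z
    simp only [ind] at hz
    simp only [Set.mem_insert_iff, Set.mem_singleton_iff]
    split_ifs at hz with h1 h2 <;>
      first
        | tauto
        | exact absurd hz (by decide)
        | exact absurd hz.symm (by decide)
  · intro h
    rw [Set.pair_eq_pair_iff] at h
    rcases h with ⟨rfl, rfl⟩ | ⟨rfl, rfl⟩
    · rfl
    · funext z; simp only [ind]; exact if_congr or_comm rfl rfl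

lemma filter_ind {n : ℕ} {i j : Fin n} (hij : i ≠ j) :
    (univ.filter fun z => ind (i, j) z ≠ 0) = {i, j} := by
  ext z
  simp only [mem_filter, mem_univ, true_and, mem_insert, mem_singleton, ind]
  by_cases h : z = i ∨ z = j <;> simp [h] <;> tauto

lemma card_ind {n : ℕ} {i j : Fin n} (hij : i ≠ j) :
    (univ.filter fun z => ind (i, j) z ≠ 0).card = 2 := by
  rw [filter_ind hij, Finset.card_pair hij]

lemma chi_ind {n : ℕ} (a : Fin n → ZMod 2) {i j : Fin n} (hij : i ≠ j) :
    chi a (ind (i, j)) = sgn (a i) * sgn (a j) := by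
  have : ∀ z, sgn (a z * ind (i, j) z) = if z ∈ ({i, j} : Finset (Fin n)) then sgn (a z) else 1 := by
    intro z
    simp only [ind, mem_insert, mem_singleton]
    by_cases h : z = i ∨ z = j <;> simp [h, sgn]
  rw [chi]
  simp_rw [this]
  rw [Finset.prod_ite_mem, Finset.univ_inter, Finset.prod_pair hij]

lemma image_ind {n : ℕ} :
    (univ.offDiag.image ind : Finset (Fin n → ZMod 2))
      = univ.filter (fun w => (univ.filter fun z => w z ≠ 0).card = 2) := by
  ext w
  simp only [mem_image, mem_filter, mem_univ, true_and, mem_offDiag]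
  constructor
  · rintro ⟨⟨i, j⟩, hij, rfl⟩
    exact card_ind hij
  · intro hw
    obtain ⟨i, j, hij, hset⟩ := Finset.card_eq_two.mp hw
    refine ⟨(i, j), hij, ?_⟩
    funext z
    have hz : w z ≠ 0 ↔ z ∈ ({i, j} : Finset (Fin n)) := by
      rw [← hset]; simp
    simp only [ind, mem_insert, mem_singleton] at hz ⊢
    by_cases h : z = i ∨ z = j
    · rw [if_pos h]
      rcases zmod2_cases (w z) with h0 | h0
      · exact absurd h (by rw [← hz]; simp [h0])
      · exact h0.symm
    · rw [if_neg h]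
      rcases zmod2_cases (w z) with h0 | h0
      · exact h0.symm
      · exact absurd (hz.mp (by simp [h0])) h

lemma fiber_ind {n : ℕ} {p : Fin n × Fin n} (hp : p ∈ (univ : Finset (Fin n)).offDiag) :
    (univ.offDiag.filter fun q => ind q = ind p).card = 2 := by
  obtain ⟨i, j⟩ := p
  simp only [mem_offDiag] at hp
  have hij : i ≠ j := hp.2.2
  have : (univ.offDiag.filter fun q => ind q = ind (i, j)) = {(i, j), (j, i)} := by
    ext ⟨x, y⟩
    simp only [mem_filter, mem_offDiag, mem_univ, true_and, mem_insert, mem_singleton,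
      Prod.mk.injEq]
    constructor
    · rintro ⟨hxy, h⟩
      exact (ind_eq_iff hij).mp h
    · rintro (⟨rfl, rfl⟩ | ⟨rfl, rfl⟩)
      · exact ⟨hij, rfl⟩
      · exact ⟨hij.symm, (ind_eq_iff hij).mpr (Or.inr ⟨rfl, rfl⟩)⟩
  rw [this, Finset.card_insert_of_notMem (by simp [Prod.ext_iff, hij]), Finset.card_singleton]

noncomputable def lam {n : ℕ} (a : Fin n → ZMod 2) : ℂ :=
  ∑ w : Fin n → ZMod 2, if (univ.filter fun z => w z ≠ 0).card = 2 then chi a w else 0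

lemma two_mul_lam {n : ℕ} (a : Fin n → ZMod 2) :
    2 * lam a = (∑ i, sgn (a i)) ^ 2 - n := by
  have hlam : lam a = ∑ w ∈ univ.filter (fun w => (univ.filter fun z => w z ≠ 0).card = 2),
      chi a w := by
    rw [lam, Finset.sum_filter]
  have hcomp := Finset.sum_comp (s := (univ : Finset (Fin n)).offDiag) (chi a) ind
  rw [image_ind] at hcomp
  have hfib : ∀ w ∈ univ.filter (fun w : Fin n → ZMod 2 =>
      (univ.filter fun z => w z ≠ 0).card = 2),
      ((univ.offDiag.filter fun q => ind q = w).card • chi a w) = 2 * chi a w := by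
    intro w hw
    rw [← image_ind] at hw
    obtain ⟨p, hp, rfl⟩ := Finset.mem_image.mp hw
    rw [fiber_ind hp]
    simp [two_smul, two_mul]
  rw [Finset.sum_congr rfl hfib] at hcomp
  have hoff : ∑ p ∈ (univ : Finset (Fin n)).offDiag, chi a (ind p)
      = ∑ p ∈ (univ : Finset (Fin n)).offDiag, sgn (a p.1) * sgn (a p.2) := by
    refine Finset.sum_congr rfl fun p hp => ?_
    obtain ⟨i, j⟩ := p
    exact chi_ind a (mem_offDiag.mp hp).2.2
  have hsq : (∑ i, sgn (a i)) ^ 2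
      = (n : ℂ) + ∑ p ∈ (univ : Finset (Fin n)).offDiag, sgn (a p.1) * sgn (a p.2) := by
    rw [sq, Finset.sum_mul_sum, ← Finset.sum_product', ← Finset.diag_union_offDiag univ,
      Finset.sum_union (Finset.disjoint_diag_offDiag _), Finset.sum_diag]
    congr 1
    have : ∀ i : Fin n, sgn (a i) * sgn (a i) = 1 := by
      intro i; rcases zmod2_cases (a i) with h | h <;> simp [h, sgn]
    simp_rw [this]
    simp
  rw [hsq, ← hoff, hcomp, hlam, Finset.mul_sum]
  ring

lemma exp_scalar (d k : ℕ) :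
    Complex.exp (Complex.I * ((Real.pi / 2 : ℝ) : ℂ) * (2 * ((d : ℂ) - k) ^ 2 - d))
      = Complex.I ^ d * (-1 : ℂ) ^ k := by
  set m : ℤ := (d : ℤ) - k with hm
  obtain ⟨t, ht⟩ : Even ((m - 1) * m) := by
    simpa using Int.even_mul_succ_self (m - 1)
  have hm2 : m ^ 2 = m + 2 * t := by linear_combination ht
  have key : (2 * ((d : ℂ) - k) ^ 2 - d) = ((d : ℂ) + 2 * k + 4 * ((t : ℂ) - k)) := by
    have h1 : ((m : ℂ)) = (d : ℂ) - k := by rw [hm]; push_cast; ring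
    have h2 : ((m : ℂ)) ^ 2 = (m : ℂ) + 2 * t := by exact_mod_cast congrArg (Int.cast : ℤ → ℂ) hm2
    rw [← h1]
    linear_combination 2 * h2 + 2 * h1
  rw [key]
  set c : ℂ := ((Real.pi / 2 : ℝ) : ℂ) with hc
  have hsplit : Complex.I * c * ((d : ℂ) + 2 * k + 4 * ((t : ℂ) - k))
      = (d : ℂ) * (c * I) + ((k : ℂ) * ((2 * c) * I) + ((t : ℂ) - k) * ((4 * c) * I)) := by
    ring
  rw [hsplit, Complex.exp_add, Complex.exp_add]
  have hcI : Complex.exp (c * I) = I := by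
    rw [Complex.exp_mul_I, hc]
    push_cast
    rw [Complex.cos_pi_div_two, Complex.sin_pi_div_two]
    ring
  have h2c : (2 * c) * I = (Real.pi : ℂ) * I := by rw [hc]; push_cast; ring
  have h4c : (4 * c) * I = 2 * (Real.pi : ℂ) * I := by rw [hc]; push_cast; ring
  have e1 : Complex.exp ((d : ℂ) * (c * I)) = I ^ d := by
    rw [Complex.exp_nat_mul, hcI]
  have e2 : Complex.exp ((k : ℂ) * ((2 * c) * I)) = (-1 : ℂ) ^ k := by
    rw [h2c, Complex.exp_nat_mul, Complex.exp_pi_mul_I]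
  have e3 : Complex.exp (((t : ℂ) - k) * ((4 * c) * I)) = 1 := by
    have : ((t : ℂ) - k) = (((t - k : ℤ) : ℂ)) := by push_cast; ring
    rw [h4c, this, Complex.exp_int_mul, Complex.exp_two_pi_mul_I, _root_.one_zpow]
  rw [e1, e2, e3, mul_one]

lemma sum_sgn {n : ℕ} (a : Fin n → ZMod 2) :
    ∑ i, sgn (a i) = (n : ℂ) - 2 * (univ.filter fun i => a i ≠ 0).card := by
  have hsplit := Finset.card_filter_add_card_filter_not
    (s := (univ : Finset (Fin n))) (p := fun i => a i ≠ 0)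
  rw [Finset.card_univ, Fintype.card_fin] at hsplit
  rw [← Finset.sum_filter_add_sum_filter_not univ (fun i => a i ≠ 0)]
  have h1 : ∀ i ∈ univ.filter (fun i => a i ≠ 0), sgn (a i) = -1 := by
    intro i hi; simp only [mem_filter] at hi; rw [sgn, if_neg hi.2]
  have h2 : ∀ i ∈ univ.filter (fun i => ¬ a i ≠ 0), sgn (a i) = 1 := by
    intro i hi; simp only [mem_filter, not_not] at hi; rw [sgn, if_pos hi.2]
  rw [Finset.sum_congr rfl h1, Finset.sum_congr rfl h2, Finset.sum_const, Finset.sum_const]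
  have hn : ((univ.filter fun i => ¬ a i ≠ 0).card : ℂ)
      = (n : ℂ) - (univ.filter fun i => a i ≠ 0).card := by
    have : ((univ.filter fun i => a i ≠ 0).card : ℂ)
        + ((univ.filter fun i => ¬ a i ≠ 0).card : ℂ) = n := by exact_mod_cast hsplit
    linear_combination this
  rw [nsmul_eq_mul, nsmul_eq_mul, hn]
  ring

lemma lam_closed {d : ℕ} (a : Fin (2 * d) → ZMod 2) :
    lam a = 2 * ((d : ℂ) - (univ.filter fun i => a i ≠ 0).card) ^ 2 - d := by
  have h2 : (2 : ℂ) ≠ 0 := two_ne_zero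
  apply mul_left_cancel₀ h2
  rw [two_mul_lam, sum_sgn]
  push_cast
  ring

lemma chi_ones {n : ℕ} (a : Fin n → ZMod 2) :
    chi a (fun _ => 1) = (-1 : ℂ) ^ (univ.filter fun i => a i ≠ 0).card := by
  rw [chi]
  have : ∀ i : Fin n, sgn (a i * 1) = if a i ≠ 0 then (-1 : ℂ) else 1 := by
    intro i
    rcases zmod2_cases (a i) with h | h <;> simp [h, sgn]
  simp_rw [this]
  rw [Finset.prod_ite, Finset.prod_const, Finset.prod_const, one_pow, mul_one]

section Main
variable {d : ℕ}

abbrev Vx (d : ℕ) := {u : Fin (2 * d) → ZMod 2 //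
  Even (Finset.univ.filter fun i => u i ≠ 0).card}

noncomputable def xvec (a : Fin (2 * d) → ZMod 2) : Vx d → ℂ := fun v => chi a v.1

lemma add_mem_Vx (u v : Fin (2 * d) → ZMod 2)
    (hu : Even (Finset.univ.filter fun i => u i ≠ 0).card)
    (hv : Even (Finset.univ.filter fun i => v i ≠ 0).card) :
    Even (Finset.univ.filter fun i => (u + v) i ≠ 0).card := by
  rw [even_iff_sum_zero] at hu hv ⊢
  simp only [Pi.add_apply, Finset.sum_add_distrib, hu, hv, add_zero]

def tau (u : Vx d) : Vx d ≃ Vx d where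
  toFun v := ⟨v.1 + u.1, add_mem_Vx _ _ v.2 u.2⟩
  invFun v := ⟨v.1 + u.1, add_mem_Vx _ _ v.2 u.2⟩
  left_inv v := by
    ext i
    show v.1 i + u.1 i + u.1 i = v.1 i
    rw [add_assoc, CharTwo.add_self_eq_zero, add_zero]
  right_inv v := by
    ext i
    show v.1 i + u.1 i + u.1 i = v.1 i
    rw [add_assoc, CharTwo.add_self_eq_zero, add_zero]

lemma adj_iff (u v : Vx d) :
    (halvedCube d).Adj u v ↔ (Finset.univ.filter fun i => u.1 i ≠ v.1 i).card = 2 := by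
  rw [halvedCube, SimpleGraph.fromRel_adj]
  constructor
  · rintro ⟨-, h | h⟩
    · exact h
    · rw [show (Finset.univ.filter fun i => u.1 i ≠ v.1 i)
          = (Finset.univ.filter fun i => v.1 i ≠ u.1 i) by
        apply Finset.filter_congr; intro i _; exact ne_comm]
      exact h
  · intro h
    refine ⟨?_, Or.inl h⟩
    intro huv
    rw [huv] at h
    simp at h

lemma eigen_adj [inst : DecidableRel (halvedCube d).Adj] (a : Fin (2 * d) → ZMod 2) :
    (halvedCube d).adjMatrix ℂ *ᵥ xvec a = lam a • xvec a := by
  funext u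
  show ∑ v, (halvedCube d).adjMatrix ℂ u v * chi a v.1 = lam a • chi a u.1
  have hterm : ∀ v : Vx d, (halvedCube d).adjMatrix ℂ u v * chi a v.1
      = (if (Finset.univ.filter fun i => u.1 i ≠ v.1 i).card = 2 then chi a v.1 else 0) := by
    intro v
    rw [SimpleGraph.adjMatrix_apply]
    by_cases h : (halvedCube d).Adj u v
    · rw [if_pos h, if_pos ((adj_iff u v).mp h), one_mul]
    · rw [if_neg h, if_neg (fun hc => h ((adj_iff u v).mpr hc)), zero_mul]
  rw [Finset.sum_congr rfl (fun v _ => hterm v)]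
  rw [← Equiv.sum_comp (tau u) (fun v : Vx d =>
    if (Finset.univ.filter fun i => u.1 i ≠ v.1 i).card = 2 then chi a v.1 else 0)]
  have hterm2 : ∀ v : Vx d,
      (if (Finset.univ.filter fun i => u.1 i ≠ ((tau u) v).1 i).card = 2
        then chi a ((tau u) v).1 else 0)
      = (if (Finset.univ.filter fun i => v.1 i ≠ 0).card = 2 then chi a v.1 else 0)
          * chi a u.1 := by
    intro v
    have hfil : (Finset.univ.filter fun i => u.1 i ≠ ((tau u) v).1 i)
        = (Finset.univ.filter fun i => v.1 i ≠ 0) := by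
      apply Finset.filter_congr
      intro i _
      show u.1 i ≠ v.1 i + u.1 i ↔ v.1 i ≠ 0
      rw [not_iff_not]
      exact ⟨fun h => by
        have := congrArg (· + u.1 i) h
        simpa [add_assoc, CharTwo.add_self_eq_zero] using this.symm,
        fun h => by rw [h, zero_add]⟩
    rw [hfil]
    show (if _ then chi a (v.1 + u.1) else 0) = _
    rw [chi_add]
    split_ifs <;> ring
  rw [Finset.sum_congr rfl (fun v _ => hterm2 v), ← Finset.sum_mul]
  have hsub : ∑ v : Vx d, (if (Finset.univ.filter fun i => v.1 i ≠ 0).card = 2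
      then chi a v.1 else 0) = lam a := by
    rw [lam]
    rw [← Finset.sum_subtype (univ.filter fun w : Fin (2 * d) → ZMod 2 =>
      Even (Finset.univ.filter fun i => w i ≠ 0).card)
      (by intro x; simp) (fun w => if (univ.filter fun z => w z ≠ 0).card = 2
        then chi a w else 0)]
    rw [Finset.sum_filter]
    apply Finset.sum_congr rfl
    intro w _
    by_cases he : Even (Finset.univ.filter fun i => w i ≠ 0).card
    · rw [if_pos he]
    · rw [if_neg he, if_neg]
      intro hc
      exact he (by rw [hc]; exact even_two)
  rw [hsub, smul_eq_mul]


lemma add_one_mem_Vx (u : Vx d) :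
    Even (Finset.univ.filter fun i => (fun j => u.1 j + 1) i ≠ 0).card := by
  rw [even_iff_sum_zero]
  have hu := (even_iff_sum_zero u.1).mp u.2
  simp only [Finset.sum_add_distrib, hu, zero_add, Finset.sum_const,
    Finset.card_univ, Fintype.card_fin, nsmul_eq_mul, mul_one]
  exact (ZMod.natCast_eq_zero_iff (2 * d) 2).mpr ⟨d, rfl⟩

lemma sub_add_eq_zero_iff (u w : Vx d) : u.1 + w.1 = 0 ↔ w = u := by
  constructor
  · intro h
    ext i
    have := congrFun h i
    simp only [Pi.add_apply, Pi.zero_apply] at this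
    have h2 := congrArg (· + w.1 i) this
    simpa [add_assoc, CharTwo.add_self_eq_zero] using h2.symm
  · rintro rfl
    funext i
    exact CharTwo.add_self_eq_zero _

lemma delta_decomp (u : Vx d) :
    (Pi.single u 1 : Vx d → ℂ)
      = ((2 : ℂ) ^ (2 * d))⁻¹ • ∑ a : Fin (2 * d) → ZMod 2, chi a u.1 • xvec a := by
  funext w
  simp only [Pi.smul_apply, Finset.sum_apply, smul_eq_mul, xvec]
  have hmul : ∀ a : Fin (2 * d) → ZMod 2, chi a u.1 * chi a w.1 = chi a (u.1 + w.1) :=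
    fun a => (chi_add a u.1 w.1).symm
  simp_rw [hmul]
  rw [sum_chi, Pi.single_apply]
  by_cases h : w = u
  · rw [if_pos ((sub_add_eq_zero_iff u w).mpr h), if_pos h]
    rw [inv_mul_cancel₀ (pow_ne_zero _ (two_ne_zero))]
  · rw [if_neg (fun hc => h ((sub_add_eq_zero_iff u w).mp hc)), if_neg h, mul_zero]

end Main

end Stmt13Aux

open Stmt13Aux

/-- For every `d ≥ 1`, the halved `2d`-cube admits perfect state
transfer at time `π/2` from each vertex `u` to the vertex `u + 𝟙`. -/
theorem stmt_13 (d : ℕ) (hd : 1 ≤ d) :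
    ∀ u : {u : Fin (2 * d) → ZMod 2 //
        Even (Finset.univ.filter fun i => u i ≠ 0).card},
      ∃ v : {u : Fin (2 * d) → ZMod 2 //
        Even (Finset.univ.filter fun i => u i ≠ 0).card},
        (∀ i, v.1 i = u.1 i + 1) ∧ HasPST (halvedCube d) u v (Real.pi / 2) := by
  intro u
  refine ⟨⟨fun j => u.1 j + 1, add_one_mem_Vx u⟩, fun i => rfl, ?_, ?_⟩
  · -- u ≠ v
    intro h
    have h0 := congrFun (congrArg Subtype.val h) ⟨0, by omega⟩
    exact one_ne_zero (left_eq_add.mp h0)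
  · -- PST
    set v : Vx d := ⟨fun j => u.1 j + 1, add_one_mem_Vx u⟩ with hv
    refine ⟨Complex.I ^ d, ?_⟩
    letI := Classical.decRel (halvedCube d).Adj
    set c : ℂ := Complex.I * ((Real.pi / 2 : ℝ) : ℂ) with hc
    set M : Matrix (Vx d) (Vx d) ℂ := c • (halvedCube d).adjMatrix ℂ with hM
    have hT : transitionMatrix (halvedCube d) (Real.pi / 2) = NormedSpace.exp M := by
      rw [transitionMatrix]
    have hexp : ∀ a : Fin (2 * d) → ZMod 2,
        NormedSpace.exp M *ᵥ xvec a
          = (Complex.I ^ d * chi a (fun _ => 1)) • xvec a := by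
      intro a
      have h1 : M *ᵥ xvec a = (c * lam a) • xvec a := by
        rw [hM, smul_mulVec, eigen_adj a, smul_smul]
      rw [exp_mulVec_eigen M (xvec a) (c * lam a) h1]
      congr 1
      rw [hc, lam_closed a, exp_scalar, chi_ones]
    rw [hT, delta_decomp u, mulVec_smul]
    have hsum : NormedSpace.exp M *ᵥ (∑ a : Fin (2 * d) → ZMod 2, chi a u.1 • xvec a)
        = ∑ a : Fin (2 * d) → ZMod 2, chi a u.1 • (NormedSpace.exp M *ᵥ xvec a) := by
      rw [← Matrix.mulVecLin_apply, map_sum]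
      exact Finset.sum_congr rfl fun a _ => by rw [_root_.map_smul, Matrix.mulVecLin_apply]
    rw [hsum]
    have hterm : ∀ a : Fin (2 * d) → ZMod 2,
        chi a u.1 • (NormedSpace.exp M *ᵥ xvec a)
          = Complex.I ^ d • (chi a v.1 • xvec a) := by
      intro a
      rw [hexp a, smul_smul, smul_smul]
      congr 1
      have hv1 : chi a v.1 = chi a u.1 * chi a (fun _ => 1) := by
        show chi a (u.1 + fun _ => 1) = _
        exact chi_add a u.1 (fun _ => 1)
      rw [hv1]
      ring
    rw [Finset.sum_congr rfl fun a _ => hterm a, ← Finset.smul_sum, delta_decomp v]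
    exact smul_comm _ _ _
end

section
/- For every n > 1, the Johnson graph J(2n, n) — the graph whose vertices are the n-element subsets of a fixed 2n-element set, two subsets being adjacent iff their intersection has exactly n−1 elements — does not admit perfect state transfer between any pair of vertices at any time. -/
open Matrix

/-- The Johnson graph `J(2n, n)`: vertices are the `n`-element subsets of a fixed
`2n`-element set, adjacent iff their intersection has exactly `n - 1` elements. -/
def johnsonGraph (n : ℕ) : SimpleGraph {s : Finset (Fin (2 * n)) // s.card = n} :=
  SimpleGraph.fromRel (fun s t => (s.1 ∩ t.1).card = n - 1)

/-! ### Auxiliary machinery -/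

/-- If `x` is an eigenvector of `M` with eigenvalue `c`, then it is an eigenvector of
`exp M` with eigenvalue `exp c`. -/
lemma exp_mulVec_eigen {W : Type*} [Fintype W] [DecidableEq W]
    (M : Matrix W W ℂ) (x : W → ℂ) (c : ℂ) (h : M *ᵥ x = c • x) :
    NormedSpace.exp M *ᵥ x = Complex.exp c • x := by
  letI : SeminormedRing (Matrix W W ℂ) := Matrix.linftyOpSemiNormedRing
  letI : NormedRing (Matrix W W ℂ) := Matrix.linftyOpNormedRing
  letI : NormedAlgebra ℂ (Matrix W W ℂ) := Matrix.linftyOpNormedAlgebra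
  have hpow : ∀ k : ℕ, M ^ k *ᵥ x = c ^ k • x := by
    intro k
    induction k with
    | zero => simp [Matrix.one_mulVec]
    | succ k ih =>
        rw [pow_succ', ← Matrix.mulVec_mulVec, ih, Matrix.mulVec_smul, h, smul_smul, ← pow_succ]
  let φ : Matrix W W ℂ →ₗ[ℂ] (W → ℂ) :=
    { toFun := fun N => N *ᵥ x
      map_add' := fun N₁ N₂ => Matrix.add_mulVec _ _ _
      map_smul' := fun r N => Matrix.smul_mulVec r N x }
  let Φ : Matrix W W ℂ →L[ℂ] (W → ℂ) := LinearMap.toContinuousLinearMap φ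
  have hsum : Summable (fun k : ℕ => ((Nat.factorial k : ℂ))⁻¹ • M ^ k) :=
    NormedSpace.expSeries_summable' M
  have hexp : NormedSpace.exp M *ᵥ x = ∑' k : ℕ, (((Nat.factorial k : ℂ))⁻¹ • M ^ k) *ᵥ x := by
    rw [NormedSpace.exp_eq_tsum ℂ]
    exact Φ.map_tsum hsum
  rw [hexp]
  have h2 : ∀ k : ℕ, (((Nat.factorial k : ℂ))⁻¹ • M ^ k) *ᵥ x
      = (((Nat.factorial k : ℂ))⁻¹ * c ^ k) • x := by
    intro k
    rw [Matrix.smul_mulVec, hpow, smul_smul]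
  simp_rw [h2]
  have hsum2 : Summable (fun k : ℕ => ((Nat.factorial k : ℂ))⁻¹ * c ^ k) := by
    simpa [smul_eq_mul] using NormedSpace.expSeries_summable' (𝕂 := ℂ) c
  rw [hsum2.tsum_smul_const]
  congr 1
  rw [Complex.exp_eq_exp_ℂ, NormedSpace.exp_eq_tsum ℂ]
  simp [smul_eq_mul]

/-- The adjacency matrix of the Johnson graph, with the `Classical` decidability instance
used by `transitionMatrix`. -/
noncomputable def Amat (n : ℕ) :
    Matrix {s : Finset (Fin (2 * n)) // s.card = n} {s : Finset (Fin (2 * n)) // s.card = n} ℂ :=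
  letI := Classical.decRel (johnsonGraph n).Adj
  (johnsonGraph n).adjMatrix ℂ

variable {n : ℕ}

lemma johnson_adj (hn : 0 < n) (s t : {s : Finset (Fin (2 * n)) // s.card = n}) :
    (johnsonGraph n).Adj s t ↔ (s.1 ∩ t.1).card = n - 1 := by
  constructor
  · rintro ⟨hne, h | h⟩
    · exact h
    · rwa [Finset.inter_comm]
  · intro h
    refine ⟨?_, Or.inl h⟩
    rintro rfl
    rw [Finset.inter_self] at h
    have := s.2
    omega

lemma Amat_symm : (Amat n)ᵀ = Amat n := by
  letI := Classical.decRel (johnsonGraph n).Adj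
  exact (johnsonGraph n).isSymm_adjMatrix

lemma Amat_apply (hn : 0 < n) (s t : {s : Finset (Fin (2 * n)) // s.card = n}) :
    Amat n s t = if (s.1 ∩ t.1).card = n - 1 then 1 else 0 := by
  letI := Classical.decRel (johnsonGraph n).Adj
  show (johnsonGraph n).adjMatrix ℂ s t = _
  rw [SimpleGraph.adjMatrix_apply]
  by_cases h : (s.1 ∩ t.1).card = n - 1
  · rw [if_pos h, if_pos ((johnson_adj hn s t).2 h)]
  · rw [if_neg h, if_neg fun ha => h ((johnson_adj hn s t).1 ha)]

lemma mem_nbrs (hn : 0 < n) {s : Finset (Fin (2 * n))} (hs : s.card = n)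
    (w : Finset (Fin (2 * n))) :
    w ∈ (s ×ˢ sᶜ).image (fun p => insert p.2 (s.erase p.1)) ↔
      w.card = n ∧ (s ∩ w).card = n - 1 := by
  constructor
  · intro hw
    obtain ⟨p, hp, rfl⟩ := Finset.mem_image.1 hw
    obtain ⟨hx, hy⟩ := Finset.mem_product.1 hp
    rw [Finset.mem_compl] at hy
    have hxy : p.2 ∉ s.erase p.1 := fun h => hy (Finset.mem_of_mem_erase h)
    have hcard : (insert p.2 (s.erase p.1)).card = n := by
      rw [Finset.card_insert_of_notMem hxy, Finset.card_erase_of_mem hx, hs]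
      omega
    refine ⟨hcard, ?_⟩
    have hint : s ∩ insert p.2 (s.erase p.1) = s.erase p.1 := by
      ext e
      simp only [Finset.mem_inter, Finset.mem_insert, Finset.mem_erase]
      constructor
      · rintro ⟨hes, he | he⟩
        · exact absurd (he ▸ hes) hy
        · exact he
      · rintro ⟨hex, hes⟩
        exact ⟨hes, Or.inr ⟨hex, hes⟩⟩
    rw [hint, Finset.card_erase_of_mem hx, hs]
  · rintro ⟨hw, hiw⟩
    have hds : (s \ w).card = 1 := by
      have := Finset.card_inter_add_card_sdiff s w
      omega
    have hdw : (w \ s).card = 1 := by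
      have := Finset.card_inter_add_card_sdiff w s
      rw [Finset.inter_comm] at this
      omega
    obtain ⟨x, hx⟩ := Finset.card_eq_one.1 hds
    obtain ⟨y, hy⟩ := Finset.card_eq_one.1 hdw
    have hxs : x ∈ s ∧ x ∉ w := Finset.mem_sdiff.1 (hx ▸ Finset.mem_singleton_self x)
    have hyw : y ∈ w ∧ y ∉ s := Finset.mem_sdiff.1 (hy ▸ Finset.mem_singleton_self y)
    refine Finset.mem_image.2 ⟨(x, y),
      Finset.mem_product.2 ⟨hxs.1, Finset.mem_compl.2 hyw.2⟩, ?_⟩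
    ext e
    simp only [Finset.mem_insert, Finset.mem_erase]
    constructor
    · rintro (rfl | ⟨hex, hes⟩)
      · exact hyw.1
      · by_contra hew
        have he : e ∈ s \ w := Finset.mem_sdiff.2 ⟨hes, hew⟩
        rw [hx] at he
        exact hex (Finset.mem_singleton.1 he)
    · intro hew
      by_cases hes : e ∈ s
      · refine Or.inr ⟨?_, hes⟩
        rintro rfl
        exact hxs.2 hew
      · have he : e ∈ w \ s := Finset.mem_sdiff.2 ⟨hew, hes⟩
        rw [hy] at he
        exact Or.inl (Finset.mem_singleton.1 he)

lemma ins_injOn (s : Finset (Fin (2 * n))) :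
    ∀ p ∈ s ×ˢ sᶜ, ∀ q ∈ s ×ˢ sᶜ,
      insert p.2 (s.erase p.1) = insert q.2 (s.erase q.1) → p = q := by
  rintro ⟨x, y⟩ hp ⟨x', y'⟩ hq h
  rw [Finset.mem_product, Finset.mem_compl] at hp hq
  obtain ⟨hx, hy⟩ := hp
  obtain ⟨hx', hy'⟩ := hq
  dsimp only at h ⊢
  have hyy : y = y' := by
    have h1 : y ∈ insert y' (s.erase x') := by
      rw [← h]; exact Finset.mem_insert_self _ _
    rcases Finset.mem_insert.1 h1 with h2 | h2
    · exact h2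
    · exact absurd (Finset.mem_of_mem_erase h2) hy
  have hxx : x = x' := by
    have h1 : x ∉ insert y' (s.erase x') := by
      rw [← h, Finset.mem_insert]
      push_neg
      exact ⟨fun he => hy (show (x, y).2 ∈ s by rw [← he]; exact hx),
        Finset.notMem_erase x s⟩
    rw [Finset.mem_insert] at h1
    push_neg at h1
    by_contra hne
    exact h1.2 (Finset.mem_erase.2 ⟨hne, hx⟩)
  simp [hxx, hyy]

lemma sum_adj (hn : 0 < n) (s : {s : Finset (Fin (2 * n)) // s.card = n})
    (f : Finset (Fin (2 * n)) → ℂ) :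
    ∑ t : {s : Finset (Fin (2 * n)) // s.card = n}, Amat n s t * f t.1
      = ∑ p ∈ s.1 ×ˢ s.1ᶜ, f (insert p.2 (s.1.erase p.1)) := by
  classical
  have h1 : ∀ t : {s : Finset (Fin (2 * n)) // s.card = n},
      Amat n s t * f t.1 = if (s.1 ∩ t.1).card = n - 1 then f t.1 else 0 := by
    intro t
    rw [Amat_apply hn]
    split <;> simp
  rw [Finset.sum_congr rfl fun t _ => h1 t, ← Finset.sum_filter,
    ← Finset.sum_image (ins_injOn s.1)]
  refine Finset.sum_bij (fun t _ => t.1) ?_ ?_ ?_ ?_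
  · intro t ht
    rw [Finset.mem_filter] at ht
    exact (mem_nbrs hn s.2 t.1).2 ⟨t.2, ht.2⟩
  · intro t₁ h₁ t₂ h₂ he
    exact Subtype.ext he
  · intro w hw
    obtain ⟨hwc, hwi⟩ := (mem_nbrs hn s.2 w).1 hw
    exact ⟨⟨w, hwc⟩, Finset.mem_filter.2 ⟨Finset.mem_univ _, hwi⟩, rfl⟩
  · intro t ht
    rfl

/-- The indicator (as a complex number) of `a ∈ w`. -/
noncomputable def chi (a : Fin (2 * n)) (w : Finset (Fin (2 * n))) : ℂ :=
  if a ∈ w then 1 else 0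

lemma card_compl_eq {s : Finset (Fin (2 * n))} (hs : s.card = n) : sᶜ.card = n := by
  rw [Finset.card_compl, hs]
  simp only [Fintype.card_fin]
  omega

lemma chi_one {a : Fin (2 * n)} {s : Finset (Fin (2 * n))} (h : a ∈ s) : chi a s = 1 := by
  simp [chi, h]

lemma chi_zero {a : Fin (2 * n)} {s : Finset (Fin (2 * n))} (h : a ∉ s) : chi a s = 0 := by
  simp [chi, h]

lemma sum_chi (hn : 0 < n) {s : Finset (Fin (2 * n))} (hs : s.card = n) (a : Fin (2 * n)) :
    ∑ p ∈ s ×ˢ sᶜ, chi a (insert p.2 (s.erase p.1))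
      = chi a s * ((n : ℂ) ^ 2 - 2 * n) + n := by
  have hsc := card_compl_eq hs
  rw [Finset.sum_product]
  by_cases ha : a ∈ s
  · have hin : ∀ x ∈ s, ∑ y ∈ sᶜ, chi a (insert y (s.erase x))
        = if a = x then 0 else (n : ℂ) := by
      intro x hx
      have hpt : ∀ y ∈ sᶜ, chi a (insert y (s.erase x))
          = if a = x then 0 else 1 := by
        intro y hy
        rw [Finset.mem_compl] at hy
        have hay : a ≠ y := fun h => hy (h ▸ ha)
        by_cases hax : a = x
        · subst hax
          simp [chi, Finset.mem_insert, Finset.mem_erase, hay]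
        · simp [chi, Finset.mem_insert, Finset.mem_erase, hax, hay, ha]
      rw [Finset.sum_congr rfl hpt, Finset.sum_const, hsc, nsmul_eq_mul]
      split <;> ring
    rw [Finset.sum_congr rfl hin]
    have hout : ∀ x ∈ s, (if a = x then 0 else (n : ℂ))
        = (n : ℂ) - (if a = x then (n : ℂ) else 0) := by
      intro x hx
      split <;> ring
    rw [Finset.sum_congr rfl hout, Finset.sum_sub_distrib, Finset.sum_const, hs,
      Finset.sum_ite_eq s a fun _ => (n : ℂ), if_pos ha, chi_one ha, nsmul_eq_mul]
    ring
  · have hin : ∀ x ∈ s, ∑ y ∈ sᶜ, chi a (insert y (s.erase x)) = 1 := by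
      intro x hx
      have hpt : ∀ y ∈ sᶜ, chi a (insert y (s.erase x))
          = if a = y then 1 else 0 := by
        intro y hy
        by_cases hay : a = y
        · simp [chi, Finset.mem_insert, hay]
        · simp [chi, Finset.mem_insert, Finset.mem_erase, hay, ha]
      rw [Finset.sum_congr rfl hpt, Finset.sum_ite_eq sᶜ a fun _ => (1 : ℂ),
        if_pos (Finset.mem_compl.2 ha)]
    rw [Finset.sum_congr rfl hin, Finset.sum_const, hs, nsmul_eq_mul, chi_zero ha]
    ring

lemma sum_chi2 (hn : 0 < n) {s : Finset (Fin (2 * n))} (hs : s.card = n)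
    {a b : Fin (2 * n)} (hab : a ≠ b) :
    ∑ p ∈ s ×ˢ sᶜ, chi a (insert p.2 (s.erase p.1)) * chi b (insert p.2 (s.erase p.1))
      = chi a s * chi b s * ((n : ℂ) * ((n : ℂ) - 2))
        + (chi a s + chi b s - 2 * chi a s * chi b s) * ((n : ℂ) - 1) := by
  have hsc := card_compl_eq hs
  rw [Finset.sum_product]
  by_cases ha : a ∈ s <;> by_cases hb : b ∈ s
  · have hin : ∀ x ∈ s, ∑ y ∈ sᶜ, chi a (insert y (s.erase x)) * chi b (insert y (s.erase x))
        = (n : ℂ) - (if a = x then (n : ℂ) else 0) - (if b = x then (n : ℂ) else 0) := by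
      intro x hx
      have hpt : ∀ y ∈ sᶜ, chi a (insert y (s.erase x)) * chi b (insert y (s.erase x))
          = (if a = x then 0 else 1) * (if b = x then 0 else 1) := by
        intro y hy
        rw [Finset.mem_compl] at hy
        have hay : a ≠ y := fun h => hy (h ▸ ha)
        have hby : b ≠ y := fun h => hy (h ▸ hb)
        congr 1
        · by_cases hax : a = x
          · subst hax
            simp [chi, Finset.mem_insert, Finset.mem_erase, hay]
          · simp [chi, Finset.mem_insert, Finset.mem_erase, hax, hay, ha]
        · by_cases hbx : b = x
          · subst hbx
            simp [chi, Finset.mem_insert, Finset.mem_erase, hby]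
          · simp [chi, Finset.mem_insert, Finset.mem_erase, hbx, hby, hb]
      rw [Finset.sum_congr rfl hpt, Finset.sum_const, hsc, nsmul_eq_mul]
      by_cases hax : a = x <;> by_cases hbx : b = x
      · exact absurd (hax.trans hbx.symm) hab
      · simp [hax, hbx]
      · simp [hax, hbx]
      · simp [hax, hbx]
    rw [Finset.sum_congr rfl hin, Finset.sum_sub_distrib, Finset.sum_sub_distrib,
      Finset.sum_const, hs, Finset.sum_ite_eq s a fun _ => (n : ℂ),
      Finset.sum_ite_eq s b fun _ => (n : ℂ), if_pos ha, if_pos hb,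
      chi_one ha, chi_one hb, nsmul_eq_mul]
    ring
  · have hin : ∀ x ∈ s, ∑ y ∈ sᶜ, chi a (insert y (s.erase x)) * chi b (insert y (s.erase x))
        = if a = x then 0 else 1 := by
      intro x hx
      have hpt : ∀ y ∈ sᶜ, chi a (insert y (s.erase x)) * chi b (insert y (s.erase x))
          = (if a = x then 0 else 1) * (if b = y then 1 else 0) := by
        intro y hy
        rw [Finset.mem_compl] at hy
        have hay : a ≠ y := fun h => hy (h ▸ ha)
        congr 1
        · by_cases hax : a = x
          · subst hax
            simp [chi, Finset.mem_insert, Finset.mem_erase, hay]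
          · simp [chi, Finset.mem_insert, Finset.mem_erase, hax, hay, ha]
        · by_cases hby : b = y
          · simp [chi, Finset.mem_insert, hby]
          · simp [chi, Finset.mem_insert, Finset.mem_erase, hby, hb]
      rw [Finset.sum_congr rfl hpt, ← Finset.mul_sum,
        Finset.sum_ite_eq sᶜ b fun _ => (1 : ℂ), if_pos (Finset.mem_compl.2 hb), mul_one]
    rw [Finset.sum_congr rfl hin]
    have hout : ∀ x ∈ s, (if a = x then (0 : ℂ) else 1)
        = 1 - (if a = x then (1 : ℂ) else 0) := by
      intro x hx; split <;> ring
    rw [Finset.sum_congr rfl hout, Finset.sum_sub_distrib, Finset.sum_const, hs,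
      Finset.sum_ite_eq s a fun _ => (1 : ℂ), if_pos ha, chi_one ha, chi_zero hb,
      nsmul_eq_mul]
    ring
  · have hin : ∀ x ∈ s, ∑ y ∈ sᶜ, chi a (insert y (s.erase x)) * chi b (insert y (s.erase x))
        = if b = x then 0 else 1 := by
      intro x hx
      have hpt : ∀ y ∈ sᶜ, chi a (insert y (s.erase x)) * chi b (insert y (s.erase x))
          = (if b = x then 0 else 1) * (if a = y then 1 else 0) := by
        intro y hy
        rw [Finset.mem_compl] at hy
        have hby : b ≠ y := fun h => hy (h ▸ hb)
        rw [mul_comm]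
        congr 1
        · by_cases hbx : b = x
          · subst hbx
            simp [chi, Finset.mem_insert, Finset.mem_erase, hby]
          · simp [chi, Finset.mem_insert, Finset.mem_erase, hbx, hby, hb]
        · by_cases hay : a = y
          · simp [chi, Finset.mem_insert, hay]
          · simp [chi, Finset.mem_insert, Finset.mem_erase, hay, ha]
      rw [Finset.sum_congr rfl hpt, ← Finset.mul_sum,
        Finset.sum_ite_eq sᶜ a fun _ => (1 : ℂ), if_pos (Finset.mem_compl.2 ha), mul_one]
    rw [Finset.sum_congr rfl hin]
    have hout : ∀ x ∈ s, (if b = x then (0 : ℂ) else 1)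
        = 1 - (if b = x then (1 : ℂ) else 0) := by
      intro x hx; split <;> ring
    rw [Finset.sum_congr rfl hout, Finset.sum_sub_distrib, Finset.sum_const, hs,
      Finset.sum_ite_eq s b fun _ => (1 : ℂ), if_pos hb, chi_one hb, chi_zero ha,
      nsmul_eq_mul]
    ring
  · have hin : ∀ x ∈ s, ∑ y ∈ sᶜ, chi a (insert y (s.erase x)) * chi b (insert y (s.erase x))
        = 0 := by
      intro x hx
      have hpt : ∀ y ∈ sᶜ, chi a (insert y (s.erase x)) * chi b (insert y (s.erase x)) = 0 := by
        intro y hy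
        by_cases hay : a = y
        · have hby : b ≠ y := fun h => hab (hay.trans h.symm)
          have hz : chi b (insert y (s.erase x)) = 0 := by
            simp [chi, Finset.mem_insert, Finset.mem_erase, hby, hb]
          rw [hz, mul_zero]
        · have hz : chi a (insert y (s.erase x)) = 0 := by
            simp [chi, Finset.mem_insert, Finset.mem_erase, hay, ha]
          rw [hz, zero_mul]
      rw [Finset.sum_congr rfl hpt, Finset.sum_const, smul_zero]
    rw [Finset.sum_congr rfl hin, Finset.sum_const, smul_zero, chi_zero ha, chi_zero hb]
    ring

/-! ### The three eigenvectors -/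

lemma eig0 (hn : 0 < n) :
    Amat n *ᵥ (fun _ => (1 : ℂ)) = ((n : ℂ) ^ 2) • (fun _ => (1 : ℂ)) := by
  funext s
  have h := sum_adj hn s (fun _ => (1 : ℂ))
  simp only [Matrix.mulVec, dotProduct, Pi.smul_apply, smul_eq_mul]
  rw [h, Finset.sum_const, Finset.card_product, card_compl_eq s.2, s.2, nsmul_eq_mul]
  push_cast
  ring

lemma eig1 (hn : 0 < n) (a : Fin (2 * n)) :
    Amat n *ᵥ (fun s => 2 * chi a s.1 - 1)
      = ((n : ℂ) ^ 2 - 2 * n) • (fun s => 2 * chi a s.1 - 1) := by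
  funext s
  have h := sum_adj hn s (fun w => 2 * chi a w - 1)
  simp only [Matrix.mulVec, dotProduct, Pi.smul_apply, smul_eq_mul]
  rw [h, Finset.sum_sub_distrib, ← Finset.mul_sum, sum_chi hn s.2 a, Finset.sum_const,
    Finset.card_product, card_compl_eq s.2, s.2, nsmul_eq_mul]
  push_cast
  ring

lemma eig2 (hn : 0 < n) {a b : Fin (2 * n)} (hab : a ≠ b) :
    Amat n *ᵥ (fun s => (4 * (n : ℂ) - 2) * (chi a s.1 * chi b s.1)
        - (2 * (n : ℂ) - 1) * (chi a s.1 + chi b s.1) + (n : ℂ))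
      = ((n : ℂ) ^ 2 - 4 * n + 2) • (fun s => (4 * (n : ℂ) - 2) * (chi a s.1 * chi b s.1)
        - (2 * (n : ℂ) - 1) * (chi a s.1 + chi b s.1) + (n : ℂ)) := by
  funext s
  have h := sum_adj hn s (fun w => (4 * (n : ℂ) - 2) * (chi a w * chi b w)
      - (2 * (n : ℂ) - 1) * (chi a w + chi b w) + (n : ℂ))
  simp only [Matrix.mulVec, dotProduct, Pi.smul_apply, smul_eq_mul]
  rw [h, Finset.sum_add_distrib, Finset.sum_sub_distrib, ← Finset.mul_sum, ← Finset.mul_sum,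
    Finset.sum_add_distrib, sum_chi2 hn s.2 hab, sum_chi hn s.2 a, sum_chi hn s.2 b,
    Finset.sum_const, Finset.card_product, card_compl_eq s.2, s.2, nsmul_eq_mul]
  by_cases ha : a ∈ s.1 <;> by_cases hb : b ∈ s.1
  · rw [chi_one ha, chi_one hb]; push_cast; ring
  · rw [chi_one ha, chi_zero hb]; push_cast; ring
  · rw [chi_zero ha, chi_one hb]; push_cast; ring
  · rw [chi_zero ha, chi_zero hb]; push_cast; ring

/-- For every `n > 1`, the Johnson graph `J(2n, n)` does not admit
perfect state transfer between any pair of vertices at any time. -/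
theorem stmt_14 (n : ℕ) (hn : 1 < n) :
    ∀ (u v : {s : Finset (Fin (2 * n)) // s.card = n}) (t : ℝ),
      ¬ HasPST (johnsonGraph n) u v t := by
  intro u v t hPST
  obtain ⟨huv, μ, hμ⟩ := hPST
  have hn0 : 0 < n := by omega
  have hU : transitionMatrix (johnsonGraph n) t
      = NormedSpace.exp ((Complex.I * (t : ℂ)) • Amat n) := rfl
  have hAs : ((Complex.I * (t : ℂ)) • Amat n)ᵀ = (Complex.I * (t : ℂ)) • Amat n := by
    rw [Matrix.transpose_smul, Amat_symm]
  have hsymU : (NormedSpace.exp ((Complex.I * (t : ℂ)) • Amat n))ᵀ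
      = NormedSpace.exp ((Complex.I * (t : ℂ)) • Amat n) := by
    rw [← Matrix.exp_transpose, hAs]
  have key : ∀ (x : {s : Finset (Fin (2 * n)) // s.card = n} → ℂ) (c : ℂ),
      Amat n *ᵥ x = c • x →
      Complex.exp (Complex.I * (t : ℂ) * c) * x u = μ * x v := by
    intro x c hx
    have h1 : NormedSpace.exp ((Complex.I * (t : ℂ)) • Amat n) *ᵥ x
        = Complex.exp (Complex.I * (t : ℂ) * c) • x := by
      apply exp_mulVec_eigen
      rw [Matrix.smul_mulVec, hx, smul_smul]
    have h2 : (NormedSpace.exp ((Complex.I * (t : ℂ)) • Amat n) *ᵥ x) ⬝ᵥ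
        (Pi.single u 1 : _ → ℂ)
        = x ⬝ᵥ (NormedSpace.exp ((Complex.I * (t : ℂ)) • Amat n) *ᵥ
            (Pi.single u 1 : _ → ℂ)) := by
      rw [dotProduct_mulVec, ← Matrix.mulVec_transpose, hsymU]
    rw [h1, ← hU, hμ] at h2
    rw [smul_dotProduct, dotProduct_single, dotProduct_smul,
      dotProduct_single] at h2
    simpa using h2
  have h0 := key (fun _ => 1) ((n : ℂ) ^ 2) (eig0 hn0)
  simp only [mul_one] at h0
  have hμ0 : μ ≠ 0 := by
    rw [← h0]; exact Complex.exp_ne_zero _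
  obtain ⟨a, ha⟩ : (u.1 \ v.1).Nonempty := by
    rw [Finset.sdiff_nonempty]
    intro hsub
    exact huv (Subtype.ext (Finset.eq_of_subset_of_card_le hsub (by rw [u.2, v.2])))
  rw [Finset.mem_sdiff] at ha
  have h1a := key _ _ (eig1 hn0 a)
  simp only [chi_one ha.1, chi_zero ha.2] at h1a
  have h1a' : Complex.exp (Complex.I * (t : ℂ) * ((n : ℂ) ^ 2 - 2 * n)) = -μ := by
    have := h1a
    norm_num at this
    linear_combination this
  by_cases hcap : (u.1 ∩ v.1).Nonempty
  · obtain ⟨b, hb⟩ := hcap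
    rw [Finset.mem_inter] at hb
    have h1b := key _ _ (eig1 hn0 b)
    simp only [chi_one hb.1, chi_one hb.2] at h1b
    norm_num at h1b
    apply hμ0
    have h2μ : (2 : ℂ) * μ = 0 := by linear_combination h1a' - h1b
    simpa using h2μ
  · have hdisj : u.1 ∩ v.1 = ∅ := Finset.not_nonempty_iff_eq_empty.1 hcap
    obtain ⟨b, hbu, hba⟩ := Finset.exists_mem_ne (by rw [u.2]; exact hn) a
    have hbv : b ∉ v.1 := by
      intro h
      have hmem : b ∈ u.1 ∩ v.1 := Finset.mem_inter.2 ⟨hbu, h⟩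
      rw [hdisj] at hmem
      exact absurd hmem (Finset.notMem_empty b)
    have h2ab := key _ _ (eig2 hn0 (Ne.symm hba : a ≠ b))
    simp only [chi_one ha.1, chi_one hbu, chi_zero ha.2, chi_zero hbv] at h2ab
    have hcne : ((4 : ℂ) * n - 2) * (1 * 1) - (2 * (n : ℂ) - 1) * (1 + 1) + n = (n : ℂ) := by
      ring
    have hcne2 : ((4 : ℂ) * n - 2) * (0 * 0) - (2 * (n : ℂ) - 1) * (0 + 0) + n = (n : ℂ) := by
      ring
    rw [hcne, hcne2] at h2ab
    have hnne : (n : ℂ) ≠ 0 := by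
      exact_mod_cast Nat.cast_ne_zero.2 (by omega)
    have h2' : Complex.exp (Complex.I * (t : ℂ) * ((n : ℂ) ^ 2 - 4 * n + 2)) = μ :=
      mul_right_cancel₀ hnne h2ab
    have key1 : Complex.exp (Complex.I * (t : ℂ) * (2 * (n : ℂ))) = -1 := by
      have hsplit : Complex.I * (t : ℂ) * ((n : ℂ) ^ 2)
          = Complex.I * (t : ℂ) * ((n : ℂ) ^ 2 - 2 * n) + Complex.I * (t : ℂ) * (2 * n) := by
        ring
      rw [hsplit, Complex.exp_add, h1a'] at h0
      have hmm : μ * Complex.exp (Complex.I * (t : ℂ) * (2 * (n : ℂ))) = μ * (-1) := by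
        linear_combination -h0
      exact mul_left_cancel₀ hμ0 hmm
    have key2 : Complex.exp (Complex.I * (t : ℂ) * (2 * (n : ℂ) - 2)) = -1 := by
      have hsplit : Complex.I * (t : ℂ) * ((n : ℂ) ^ 2 - 2 * n)
          = Complex.I * (t : ℂ) * ((n : ℂ) ^ 2 - 4 * n + 2)
            + Complex.I * (t : ℂ) * (2 * n - 2) := by
        ring
      rw [hsplit, Complex.exp_add, h2'] at h1a'
      have hmm : μ * Complex.exp (Complex.I * (t : ℂ) * (2 * (n : ℂ) - 2)) = μ * (-1) := by
        linear_combination h1a'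
      exact mul_left_cancel₀ hμ0 hmm
    have key3 : Complex.exp (Complex.I * (t : ℂ) * 2) = 1 := by
      have hsplit : Complex.I * (t : ℂ) * (2 * (n : ℂ))
          = Complex.I * (t : ℂ) * (2 * (n : ℂ) - 2) + Complex.I * (t : ℂ) * 2 := by
        ring
      rw [hsplit, Complex.exp_add, key2] at key1
      linear_combination -key1
    have key4 : Complex.exp (Complex.I * (t : ℂ) * (2 * (n : ℂ))) = 1 := by
      have hrw : Complex.I * (t : ℂ) * (2 * (n : ℂ)) = (n : ℂ) * (Complex.I * (t : ℂ) * 2) := by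
        ring
      rw [hrw, Complex.exp_nat_mul, key3, one_pow]
    rw [key4] at key1
    norm_num at key1
end

section
/- Let X be a distance-regular graph on n vertices of diameter d, with distance matrices A_0, …, A_d, distinct eigenvalues θ_0 > θ_1 > … > θ_d, and spectral idempotents E_0, …, E_d. Suppose P and Q are (d+1)×(d+1) real matrices satisfying A_i = Σ_{j=0}^d P_{ji}·E_j for all i and E_j = (1/n)·Σ_{i=0}^d Q_{ij}·A_i for all j. Then for every ℓ ∈ {0, …, d} and every t ∈ ℝ, the mixing matrix M(t) satisfies M(t)·E_ℓ = μ_ℓ(t)·E_ℓ, where μ_ℓ(t) = Σ_{k=0}^d (1/n²)·(Σ_{r=0}^d e^{iθ_r t}·Q_{kr})·(Σ_{j=0}^d e^{−iθ_j t}·Q_{kj})·P_{ℓk}. -/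
open Matrix
open Fin.NatCast

/-- `G` is a distance-regular graph of diameter `d` with intersection parameters `b`, `c`. -/
def IsDRG {V : Type*} [Fintype V] [DecidableEq V] (G : SimpleGraph V)
    (d : ℕ) (b c : ℕ → ℕ) : Prop :=
  G.Connected ∧ (∀ u v, G.dist u v ≤ d) ∧ (∃ u v, G.dist u v = d) ∧
  (∀ i, 1 ≤ i → i ≤ d → ∀ u v : V, G.dist u v = i →
      Nat.card {w : V // G.Adj v w ∧ G.dist u w = i - 1} = c i) ∧
  (∀ i, i ≤ d - 1 → ∀ u v : V, G.dist u v = i →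
      Nat.card {w : V // G.Adj v w ∧ G.dist u w = i + 1} = b i)

/-- The `i`-th distance matrix of a graph. -/
noncomputable def distMatrix {V : Type*} [Fintype V] [DecidableEq V] (G : SimpleGraph V)
    (i : ℕ) : Matrix V V ℝ :=
  Matrix.of fun u v => if G.dist u v = i then 1 else 0

/-- The mixing matrix `M(t) = U(t) ∘ conj(U(t))` (entrywise product). -/
noncomputable def mixingMatrix {V : Type*} [Fintype V] [DecidableEq V]
    (G : SimpleGraph V) (t : ℝ) : Matrix V V ℂ :=
  Matrix.of fun i j =>
    transitionMatrix G t i j * (starRingEnd ℂ) (transitionMatrix G t i j)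

/-- The matrices `E j` form the spectral decomposition of `M` with (distinct)
eigenvalues `lam j`. -/
def IsSpectralDecomp {V : Type*} [Fintype V] [DecidableEq V] {d : ℕ}
    (M : Matrix V V ℝ) (lam : Fin (d+1) → ℝ) (E : Fin (d+1) → Matrix V V ℝ) : Prop :=
  (∀ j, (E j).IsSymm) ∧ (∀ j k, E j * E k = if j = k then E j else 0) ∧
  (∑ j, E j = 1) ∧ M = ∑ j, lam j • E j


open Nat in
lemma pow_sum_idem' {V : Type*} [Fintype V] [DecidableEq V] {d : ℕ}
    (c : Fin (d+1) → ℂ) (F : Fin (d+1) → Matrix V V ℂ)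
    (horth : ∀ j k, F j * F k = if j = k then F j else 0)
    (hsum : ∑ j, F j = 1) :
    ∀ m : ℕ, (∑ j, c j • F j) ^ m = ∑ j, (c j) ^ m • F j := by
  intro m
  induction m with
  | zero => simpa using hsum.symm
  | succ m ih =>
    rw [pow_succ, ih, Finset.sum_mul_sum]
    rw [Finset.sum_comm]
    refine Finset.sum_congr rfl fun j _ => ?_
    rw [Finset.sum_eq_single j]
    · rw [smul_mul_assoc, mul_smul_comm, horth, if_pos rfl, smul_smul, pow_succ,
        mul_comm (c j ^ m)]
    · intro i _ hij
      rw [smul_mul_assoc, mul_smul_comm, horth, if_neg hij, smul_zero, smul_zero]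
    · simp

open Nat in
lemma exp_sum_idem' {V : Type*} [Fintype V] [DecidableEq V] {d : ℕ}
    (c : Fin (d+1) → ℂ) (F : Fin (d+1) → Matrix V V ℂ)
    (horth : ∀ j k, F j * F k = if j = k then F j else 0)
    (hsum : ∑ j, F j = 1) :
    NormedSpace.exp (∑ j, c j • F j) = ∑ j, Complex.exp (c j) • F j := by
  rw [NormedSpace.exp_eq_tsum ℂ]
  have h1 : ∀ m : ℕ, ((m ! : ℂ)⁻¹) • (∑ j, c j • F j) ^ m
      = ∑ j, (((m ! : ℂ)⁻¹ • (c j) ^ m) • F j) := by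
    intro m
    rw [pow_sum_idem' c F horth hsum m, Finset.smul_sum]
    exact Finset.sum_congr rfl fun j _ => by rw [smul_smul, smul_eq_mul]
  calc (∑' m : ℕ, ((m ! : ℂ)⁻¹) • (∑ j, c j • F j) ^ m)
      = ∑' m : ℕ, ∑ j, (((m ! : ℂ)⁻¹ • (c j) ^ m) • F j) := tsum_congr h1
    _ = ∑ j, ∑' m : ℕ, (((m ! : ℂ)⁻¹ • (c j) ^ m) • F j) := by
        refine Summable.tsum_finsetSum fun j _ => ?_
        exact (NormedSpace.expSeries_summable' (𝕂 := ℂ) (c j)).smul_const _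
    _ = ∑ j, Complex.exp (c j) • F j := by
        refine Finset.sum_congr rfl fun j _ => ?_
        rw [Summable.tsum_smul_const (NormedSpace.expSeries_summable' (𝕂 := ℂ) (c j))]
        congr 1
        rw [Complex.exp_eq_exp_ℂ]
        exact (congrFun (NormedSpace.exp_eq_tsum (𝕂 := ℂ) (𝔸 := ℂ)) (c j)).symm

/-- eigenvalues of the mixing matrix of a distance-regular graph in
terms of the `P` and `Q` matrices of the associated scheme: for every `ℓ` and `t`,
`M(t) · E ℓ = μ_ℓ(t) • E ℓ` with
`μ_ℓ(t) = ∑ k (1/n²)(∑ r e^{iθ_r t} Q k r)(∑ j e^{-iθ_j t} Q k j) P ℓ k`. -/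
theorem stmt_18 {V : Type*} [Fintype V] [DecidableEq V] {d n : ℕ}
    (G : SimpleGraph V) [DecidableRel G.Adj]
    (hn : Fintype.card V = n)
    (hdrg : ∃ b c : ℕ → ℕ, IsDRG G d b c)
    (θ : Fin (d+1) → ℝ) (hθ : StrictAnti θ)
    (hspec : spectrum ℝ (G.adjMatrix ℝ) = Set.range θ)
    (E : Fin (d+1) → Matrix V V ℝ)
    (hE : IsSpectralDecomp (G.adjMatrix ℝ) θ E)
    (P Q : Matrix (Fin (d+1)) (Fin (d+1)) ℝ)
    (hP : ∀ i, distMatrix G i = ∑ j, P j i • E j)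
    (hQ : ∀ j, E j = ((n : ℝ))⁻¹ • ∑ i, Q i j • distMatrix G i)
    (ℓ : Fin (d+1)) (t : ℝ) :
    mixingMatrix G t * (E ℓ).map (fun x : ℝ => (x : ℂ)) =
      (∑ k, ((n : ℂ) ^ 2)⁻¹ *
          (∑ r, Complex.exp (Complex.I * (θ r : ℂ) * (t : ℂ)) * (Q k r : ℂ)) *
          (∑ j, Complex.exp (-(Complex.I * (θ j : ℂ) * (t : ℂ))) * (Q k j : ℂ)) *
          (P ℓ k : ℂ)) •
        (E ℓ).map (fun x : ℝ => (x : ℂ)) := by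
  obtain ⟨b, cc, hconn, hdle, -⟩ := hdrg
  obtain ⟨hsym, horth, hone, hA⟩ := hE
  have hcoe : (fun x : ℝ => (x : ℂ)) = ⇑Complex.ofRealHom := rfl
  rw [hcoe]
  set ρ : ℝ →+* ℂ := Complex.ofRealHom with hρ
  set F : Fin (d+1) → Matrix V V ℂ := fun j => (E j).map ρ with hF
  have hFo : ∀ j k, F j * F k = if j = k then F j else 0 := by
    intro j k
    rw [hF, ← Matrix.map_mul, horth]
    split_ifs <;> simp
  have hFone : (∑ j, F j) = 1 := by
    have h1 : (∑ j, E j).map ρ = (1 : Matrix V V ℝ).map ρ := by rw [hone]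
    rw [Matrix.map_one ρ (map_zero ρ) (map_one ρ)] at h1
    rw [← h1]
    ext u v
    simp [hF, Matrix.map_apply, Matrix.sum_apply]
  have hU : transitionMatrix G t
      = ∑ j, Complex.exp (Complex.I * (θ j : ℂ) * (t : ℂ)) • F j := by
    have hAc : (letI := Classical.decRel G.Adj; G.adjMatrix ℂ)
        = (G.adjMatrix ℝ).map ρ := by
      ext u v
      by_cases h : G.Adj u v <;>
        simp [SimpleGraph.adjMatrix, h, Matrix.map_apply, Complex.ofRealHom_eq_coe]
    have hAsum : (Complex.I * (t : ℂ)) • ((G.adjMatrix ℝ).map ρ)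
        = ∑ j, (Complex.I * (θ j : ℂ) * (t : ℂ)) • F j := by
      have h2 : (G.adjMatrix ℝ).map ρ = ∑ j, ((θ j : ℂ)) • F j := by
        rw [hA]
        ext u v
        simp [hρ, hF, Matrix.map_apply, Matrix.sum_apply, Matrix.smul_apply,
          Complex.ofRealHom_eq_coe]
      rw [h2, Finset.smul_sum]
      refine Finset.sum_congr rfl fun j _ => ?_
      rw [smul_smul]
      ring_nf
    rw [transitionMatrix, hAc, hAsum]
    exact exp_sum_idem' _ F hFo hFone
  have hidx : ∀ u v : V, G.dist u v < d + 1 := fun u v =>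
    Nat.lt_succ_of_le (hdle u v)
  set idx : V → V → Fin (d+1) := fun u v => ⟨G.dist u v, hidx u v⟩ with hidxdef
  have hDentry : ∀ (i : Fin (d+1)) (u v : V),
      distMatrix G (i : ℕ) u v = if i = idx u v then 1 else 0 := by
    intro i u v
    simp only [distMatrix, Matrix.of_apply]
    by_cases h : i = idx u v
    · subst h; simp [hidxdef]
    · rw [if_neg, if_neg h]
      intro hd
      exact h (Fin.ext (by simp [hidxdef, hd]))
  have hEentry : ∀ (j : Fin (d+1)) (u v : V),
      E j u v = (n : ℝ)⁻¹ * Q (idx u v) j := by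
    intro j u v
    rw [hQ j]
    simp only [Matrix.smul_apply, Matrix.sum_apply, smul_eq_mul]
    congr 1
    rw [Finset.sum_eq_single (idx u v)]
    · rw [hDentry, if_pos rfl, mul_one]
    · intro i _ hi
      rw [hDentry, if_neg hi, mul_zero]
    · simp
  have hUentry : ∀ u v : V, transitionMatrix G t u v
      = (n : ℂ)⁻¹ * ∑ j, Complex.exp (Complex.I * (θ j : ℂ) * (t : ℂ)) * (Q (idx u v) j : ℂ) := by
    intro u v
    rw [hU]
    simp only [Matrix.sum_apply, Matrix.smul_apply, hF, Matrix.map_apply, smul_eq_mul]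
    rw [Finset.mul_sum]
    refine Finset.sum_congr rfl fun j _ => ?_
    rw [hEentry j u v]
    simp only [hρ, _root_.map_mul, map_inv₀, Complex.ofRealHom_eq_coe]
    push_cast
    ring
  have hconjI : ∀ j : Fin (d+1), (starRingEnd ℂ) (Complex.I * (θ j : ℂ) * (t : ℂ))
      = -(Complex.I * (θ j : ℂ) * (t : ℂ)) := by
    intro j
    simp only [_root_.map_mul, Complex.conj_I, Complex.conj_ofReal]
    ring
  have hconj : ∀ k : Fin (d+1),
      (starRingEnd ℂ) (∑ r, Complex.exp (Complex.I * (θ r : ℂ) * (t : ℂ)) * (Q k r : ℂ))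
      = ∑ j, Complex.exp (-(Complex.I * (θ j : ℂ) * (t : ℂ))) * (Q k j : ℂ) := by
    intro k
    rw [map_sum]
    refine Finset.sum_congr rfl fun j _ => ?_
    rw [_root_.map_mul, ← Complex.exp_conj, hconjI, Complex.conj_ofReal]
  have hcn : (starRingEnd ℂ) ((n : ℂ)⁻¹) = (n : ℂ)⁻¹ := by
    rw [map_inv₀]
    norm_num
  have hM : mixingMatrix G t
      = ∑ k, (((n : ℂ) ^ 2)⁻¹ *
          (∑ r, Complex.exp (Complex.I * (θ r : ℂ) * (t : ℂ)) * (Q k r : ℂ)) *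
          (∑ j, Complex.exp (-(Complex.I * (θ j : ℂ) * (t : ℂ))) * (Q k j : ℂ)))
          • (distMatrix G (k : ℕ)).map ρ := by
    ext u v
    simp only [mixingMatrix, Matrix.of_apply, Matrix.sum_apply, Matrix.smul_apply,
      Matrix.map_apply, smul_eq_mul]
    rw [hUentry u v, _root_.map_mul, hconj (idx u v), hcn]
    simp_rw [hDentry]
    simp only [apply_ite ρ, _root_.map_one, _root_.map_zero, mul_ite, mul_one, mul_zero]
    rw [Finset.sum_ite_eq' Finset.univ (idx u v)]
    simp only [Finset.mem_univ, if_pos]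
    ring
  have hDP : ∀ k : Fin (d+1),
      (distMatrix G (k : ℕ)).map ρ * F ℓ = (P ℓ k : ℂ) • F ℓ := by
    intro k
    have hreal : distMatrix G (k : ℕ) * E ℓ = P ℓ k • E ℓ := by
      rw [hP (k : ℕ), Finset.sum_mul]
      rw [Finset.sum_eq_single ℓ]
      · rw [smul_mul_assoc, horth, if_pos rfl, Fin.cast_val_eq_self]
      · intro j _ hj
        rw [smul_mul_assoc, horth, if_neg hj, smul_zero]
      · simp
    rw [hF, ← Matrix.map_mul, hreal]
    ext u v
    simp [hρ, Matrix.map_apply, Matrix.smul_apply, Complex.ofRealHom_eq_coe]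
  rw [hM, Finset.sum_mul, Finset.sum_smul]
  refine Finset.sum_congr rfl fun k _ => ?_
  rw [smul_mul_assoc, hDP k, smul_smul]
end
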